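/- arXiv:1403.6689 — 3 statements merged into one kernel-verified Lean document; each statement's English description precedes it below -/
import Mathlib

section
/- For any two substitutions φ, ψ with the same index set σ' and any formula F over σ∪σ', the implication ⋀_{p∈σ'}(φ_p ↔ ψ_p) → (φF ↔ ψF) is a theorem of the basic infinitary system. -/
open Classical

/-- Infinitary propositional formulas over a signature `σ`: atoms, set-indexed
conjunctions and disjunctions (represented by families indexed by a type,
which corresponds exactly to *bounded* sets of formulas in the hierarchy),
and implication. -/
inductive IForm (σ : Type) : Type 1
  | atom : σ → IForm σ
  | conj : (ι : Type) → (ι → IForm σ) → IForm σ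
  | disj : (ι : Type) → (ι → IForm σ) → IForm σ
  | impl : IForm σ → IForm σ → IForm σ

namespace IForm

variable {σ : Type}

/-- `⊥` is the empty disjunction. -/
def bot : IForm σ := disj Empty Empty.elim

/-- `¬F` abbreviates `F → ⊥`. -/
def neg (F : IForm σ) : IForm σ := impl F bot

/-- Binary conjunction `F ∧ G` as `{F, G}^∧`. -/
def and2 (F G : IForm σ) : IForm σ := conj Bool (fun b => cond b F G)

/-- Binary disjunction `F ∨ G` as `{F, G}^∨`. -/
def or2 (F G : IForm σ) : IForm σ := disj Bool (fun b => cond b F G)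

/-- Ternary disjunction. -/
def or3 (F G H : IForm σ) : IForm σ := disj (Fin 3) (fun i => [F, G, H].get i)

/-- `F ↔ G` abbreviates `(F → G) ∧ (G → F)`. -/
def biimp (F G : IForm σ) : IForm σ := and2 (impl F G) (impl G F)

/-- Satisfaction of an infinitary formula by an interpretation `I ⊆ σ`. -/
def sat (I : Set σ) : IForm σ → Prop
  | atom p => p ∈ I
  | conj _ f => ∀ i, sat I (f i)
  | disj _ f => ∃ i, sat I (f i)
  | impl F G => sat I F → sat I G

/-- The reduct `F^I` of a formula w.r.t. an interpretation `I`. -/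
noncomputable def reduct (I : Set σ) : IForm σ → IForm σ
  | atom p => if p ∈ I then atom p else bot
  | conj ι f => conj ι (fun i => reduct I (f i))
  | disj ι f => disj ι (fun i => reduct I (f i))
  | impl F G => if sat I (impl F G) then impl (reduct I F) (reduct I G) else bot

/-- `I` satisfies a set of formulas if it satisfies all its elements. -/
def satSet (I : Set σ) (H : Set (IForm σ)) : Prop := ∀ F ∈ H, sat I F

/-- `I` is a stable model of a set `H` of formulas if it is minimal w.r.t.
set inclusion among the interpretations satisfying the reduct `H^I`. -/
def StableModel (I : Set σ) (H : Set (IForm σ)) : Prop :=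
  satSet I (reduct I '' H) ∧ ∀ J : Set σ, satSet J (reduct I '' H) → J ⊆ I → J = I

noncomputable instance : DecidableEq (IForm σ) := Classical.decEq _

/-- The basic infinitary system of natural deduction: sequents `Γ ⇒ F` where
`Γ` is a finite set of infinitary formulas.  Axiom `F ⇒ F`; introduction and
elimination rules for set-indexed conjunction and disjunction and for
implication; weakening. -/
inductive Deriv : Finset (IForm σ) → IForm σ → Prop
  | ax (F : IForm σ) : Deriv {F} F
  | conjI (Γ : Finset (IForm σ)) (ι : Type) (f : ι → IForm σ) :
      (∀ i, Deriv Γ (f i)) → Deriv Γ (conj ι f)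
  | conjE (Γ : Finset (IForm σ)) (ι : Type) (f : ι → IForm σ) (i : ι) :
      Deriv Γ (conj ι f) → Deriv Γ (f i)
  | disjI (Γ : Finset (IForm σ)) (ι : Type) (f : ι → IForm σ) (i : ι) :
      Deriv Γ (f i) → Deriv Γ (disj ι f)
  | disjE (Γ Δ : Finset (IForm σ)) (ι : Type) (f : ι → IForm σ) (F : IForm σ) :
      Deriv Γ (disj ι f) → (∀ i, Deriv (insert (f i) Δ) F) → Deriv (Γ ∪ Δ) F
  | implI (Γ : Finset (IForm σ)) (F G : IForm σ) :
      Deriv (insert F Γ) G → Deriv Γ (impl F G)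
  | implE (Γ Δ : Finset (IForm σ)) (F G : IForm σ) :
      Deriv Γ F → Deriv Δ (impl F G) → Deriv (Γ ∪ Δ) G
  | weak (Γ Δ : Finset (IForm σ)) (F : IForm σ) :
      Deriv Γ F → Deriv (Γ ∪ Δ) F

end IForm
namespace IForm

/-- Application of a substitution `φ` (a family of formulas over `σ` indexed by
a disjoint signature `σ'`) to a formula over `σ ∪ σ'` (modeled as `σ ⊕ σ'`):
atoms of `σ` are unchanged, atoms `q` of `σ'` are replaced by `φ q`, and the
substitution commutes with the connectives. -/
def subst {σ σ' : Type} (φ : σ' → IForm σ) : IForm (σ ⊕ σ') → IForm σ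
  | atom (Sum.inl p) => atom p
  | atom (Sum.inr q) => φ q
  | conj ι f => conj ι fun i => subst φ (f i)
  | disj ι f => disj ι fun i => subst φ (f i)
  | impl F G => impl (subst φ F) (subst φ G)

end IForm

namespace IForm

variable {σ : Type}

theorem Deriv.mono {Γ Δ : Finset (IForm σ)} {F : IForm σ}
    (h : Deriv Γ F) (hsub : Γ ⊆ Δ) : Deriv Δ F := by
  have := Deriv.weak Γ Δ F h
  rwa [Finset.union_eq_right.mpr hsub] at this

theorem Deriv.assum {Γ : Finset (IForm σ)} {F : IForm σ} (h : F ∈ Γ) :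
    Deriv Γ F :=
  (Deriv.ax F).mono (Finset.singleton_subset_iff.mpr h)

theorem Deriv.implE' {Γ : Finset (IForm σ)} {F G : IForm σ}
    (h1 : Deriv Γ F) (h2 : Deriv Γ (impl F G)) : Deriv Γ G := by
  have := Deriv.implE Γ Γ F G h1 h2
  rwa [Finset.union_self] at this

theorem Deriv.biimpI {Γ : Finset (IForm σ)} {F G : IForm σ}
    (h1 : Deriv Γ (impl F G)) (h2 : Deriv Γ (impl G F)) :
    Deriv Γ (biimp F G) :=
  Deriv.conjI _ _ _ (fun b => by cases b <;> simpa)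

theorem Deriv.biimpE1 {Γ : Finset (IForm σ)} {F G : IForm σ}
    (h : Deriv Γ (biimp F G)) : Deriv Γ (impl F G) :=
  Deriv.conjE _ _ _ true h

theorem Deriv.biimpE2 {Γ : Finset (IForm σ)} {F G : IForm σ}
    (h : Deriv Γ (biimp F G)) : Deriv Γ (impl G F) :=
  Deriv.conjE _ _ _ false h

theorem Deriv.biimp_refl (Γ : Finset (IForm σ)) (F : IForm σ) :
    Deriv Γ (biimp F F) := by
  refine Deriv.biimpI ?_ ?_ <;>
  exact Deriv.implI _ _ _ (Deriv.assum (Finset.mem_insert_self _ _))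

theorem biimp_subst_aux {σ' : Type} (φ ψ : σ' → IForm σ)
    (F : IForm (σ ⊕ σ')) {Γ : Finset (IForm σ)}
    (hΓ : Deriv Γ (conj σ' fun p => biimp (φ p) (ψ p))) :
    Deriv Γ (biimp (subst φ F) (subst ψ F)) := by
  induction F generalizing Γ with
  | atom p =>
    cases p with
    | inl p => exact Deriv.biimp_refl _ _
    | inr q => exact Deriv.conjE _ _ _ q hΓ
  | conj ι f ih =>
    have dir : ∀ (α β : σ' → IForm σ),
        (∀ i, Deriv Γ (impl (subst α (f i)) (subst β (f i)))) →
        Deriv Γ (impl (conj ι fun i => subst α (f i))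
          (conj ι fun i => subst β (f i))) := by
      intro α β h
      refine Deriv.implI _ _ _ (Deriv.conjI _ _ _ fun i => ?_)
      have hins : Deriv (insert (conj ι fun i => subst α (f i)) Γ)
          (subst α (f i)) :=
        Deriv.conjE _ _ _ i (Deriv.assum (Finset.mem_insert_self _ _))
      exact hins.implE' ((h i).mono (Finset.subset_insert _ _))
    exact Deriv.biimpI (dir φ ψ fun i => (ih i hΓ).biimpE1)
      (dir ψ φ fun i => (ih i hΓ).biimpE2)
  | disj ι f ih =>
    have dir : ∀ (α β : σ' → IForm σ),
        (∀ i, Deriv Γ (impl (subst α (f i)) (subst β (f i)))) →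
        Deriv Γ (impl (disj ι fun i => subst α (f i))
          (disj ι fun i => subst β (f i))) := by
      intro α β h
      refine Deriv.implI _ _ _ ?_
      rw [Finset.insert_eq]
      refine Deriv.disjE _ Γ _ _ _ (Deriv.ax _) fun i => ?_
      have hf : Deriv (insert (subst α (f i)) Γ) (subst α (f i)) :=
        Deriv.assum (Finset.mem_insert_self _ _)
      exact Deriv.disjI _ _ _ i
        (hf.implE' ((h i).mono (Finset.subset_insert _ _)))
    exact Deriv.biimpI (dir φ ψ fun i => (ih i hΓ).biimpE1)
      (dir ψ φ fun i => (ih i hΓ).biimpE2)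
  | impl F G ihF ihG =>
    have dir : ∀ (α β : σ' → IForm σ),
        Deriv Γ (impl (subst β F) (subst α F)) →
        Deriv Γ (impl (subst α G) (subst β G)) →
        Deriv Γ (impl (impl (subst α F) (subst α G))
          (impl (subst β F) (subst β G))) := by
      intro α β hF hG
      refine Deriv.implI _ _ _ (Deriv.implI _ _ _ ?_)
      have hsub : Γ ⊆ insert (subst β F)
          (insert (impl (subst α F) (subst α G)) Γ) :=
        (Finset.subset_insert _ _).trans (Finset.subset_insert _ _)
      have hant : Deriv (insert (subst β F)
          (insert (impl (subst α F) (subst α G)) Γ)) (subst β F) :=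
        Deriv.assum (Finset.mem_insert_self _ _)
      have himp : Deriv (insert (subst β F)
          (insert (impl (subst α F) (subst α G)) Γ))
          (impl (subst α F) (subst α G)) :=
        Deriv.assum (Finset.mem_insert_of_mem (Finset.mem_insert_self _ _))
      exact ((hant.implE' (hF.mono hsub)).implE' himp).implE'
        (hG.mono hsub)
    exact Deriv.biimpI
      (dir φ ψ (ihF hΓ).biimpE2 (ihG hΓ).biimpE1)
      (dir ψ φ (ihF hΓ).biimpE1 (ihG hΓ).biimpE2)

end IForm

open IForm in
/-- For substitutions `φ, ψ` with the same index set `σ'` and any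
formula `F` over `σ ∪ σ'`, the implication
`⋀_{p∈σ'}(φ_p ↔ ψ_p) → (φF ↔ ψF)` is a theorem of the basic system. -/
theorem basic_replacement_imp {σ σ' : Type} (φ ψ : σ' → IForm σ)
    (F : IForm (σ ⊕ σ')) :
    Deriv ∅ (impl
      (conj σ' fun p => biimp (φ p) (ψ p))
      (biimp (subst φ F) (subst ψ F))) := by
  refine Deriv.implI _ _ _ ?_
  exact biimp_subst_aux φ ψ F (Deriv.assum (Finset.mem_insert_self _ _))
end

section
/- If infinitary formulas F and G are equivalent in the basic system (F↔G is a theorem), then for any set 𝓗 of infinitary formulas, 𝓗 ∪ {F} and 𝓗 ∪ {G} have the same stable models. -/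
open Classical

namespace IForm

variable {σ : Type}

lemma not_sat_bot (I : Set σ) : ¬ sat I (bot : IForm σ) := fun ⟨i, _⟩ => i.elim

lemma persist {I J : Set σ} : ∀ {F : IForm σ}, sat J (reduct I F) → sat I F
  | atom p, h => by
      unfold reduct at h; split_ifs at h with hp
      · exact hp
      · exact absurd h (not_sat_bot J)
  | conj ι f, h => fun i => persist (h i)
  | disj ι f, h => by obtain ⟨i, hi⟩ := h; exact ⟨i, persist hi⟩
  | impl F G, h => by
      unfold reduct at h; split_ifs at h with hp
      · exact hp
      · exact absurd h (not_sat_bot J)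

lemma sat_reduct_self (I : Set σ) : ∀ F : IForm σ, sat I (reduct I F) ↔ sat I F
  | atom p => by
      unfold reduct; split_ifs with hp
      · simp [sat, hp]
      · exact ⟨fun hb => absurd hb (not_sat_bot I), fun hs => absurd hs hp⟩
  | conj ι f => by
      constructor
      · intro h i; exact (sat_reduct_self I (f i)).1 (h i)
      · intro h i; exact (sat_reduct_self I (f i)).2 (h i)
  | disj ι f => by
      constructor
      · rintro ⟨i, hi⟩; exact ⟨i, (sat_reduct_self I (f i)).1 hi⟩
      · rintro ⟨i, hi⟩; exact ⟨i, (sat_reduct_self I (f i)).2 hi⟩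
  | impl F G => by
      unfold reduct; split_ifs with hp
      · constructor
        · intro _; exact hp
        · intro h hF
          exact (sat_reduct_self I G).2 (hp ((sat_reduct_self I F).1 hF))
      · exact ⟨fun hb => absurd hb (not_sat_bot I), fun hs => absurd hs hp⟩

lemma sound {Γ : Finset (IForm σ)} {F : IForm σ} (d : Deriv Γ F) :
    ∀ I J : Set σ, (∀ K ∈ Γ, sat J (reduct I K)) → sat J (reduct I F) := by
  induction d with
  | ax F => intro I J h; exact h F (Finset.mem_singleton_self F)
  | conjI Γ ι f _ ih => intro I J h; exact fun i => ih i I J h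
  | conjE Γ ι f i _ ih => intro I J h; exact ih I J h i
  | disjI Γ ι f i _ ih => intro I J h; exact ⟨i, ih I J h⟩
  | disjE Γ Δ ι f F _ _ ih1 ih2 =>
      intro I J h
      obtain ⟨i, hi⟩ := ih1 I J (fun K hK => h K (Finset.mem_union_left _ hK))
      refine ih2 i I J ?_
      intro K hK
      rcases Finset.mem_insert.1 hK with rfl | hK
      · exact hi
      · exact h K (Finset.mem_union_right _ hK)
  | implI Γ F G _ ih =>
      intro I J h
      have hcl : sat I (impl F G) := by
        intro hF
        have hall : ∀ K ∈ insert F Γ, sat I (reduct I K) := by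
          intro K hK
          rcases Finset.mem_insert.1 hK with rfl | hK
          · exact (sat_reduct_self I K).2 hF
          · exact (sat_reduct_self I K).2 (persist (h K hK))
        exact (sat_reduct_self I G).1 (ih I I hall)
      show sat J (reduct I (impl F G))
      unfold reduct
      rw [if_pos hcl]
      intro hF
      refine ih I J ?_
      intro K hK
      rcases Finset.mem_insert.1 hK with rfl | hK
      · exact hF
      · exact h K hK
  | implE Γ Δ F G _ _ ih1 ih2 =>
      intro I J h
      have h2 := ih2 I J (fun K hK => h K (Finset.mem_union_right _ hK))
      unfold reduct at h2
      split_ifs at h2 with hp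
      · exact h2 (ih1 I J (fun K hK => h K (Finset.mem_union_left _ hK)))
      · exact absurd h2 (not_sat_bot J)
  | weak Γ Δ F _ ih =>
      intro I J h
      exact ih I J (fun K hK => h K (Finset.mem_union_left _ hK))

end IForm

/-- Main Theorem (b): If `F` is equivalent to `G` in the basic
system, then for any set `𝓗` of infinitary formulas, `𝓗 ∪ {F}` and
`𝓗 ∪ {G}` have the same stable models. -/
theorem main_theorem_b {σ : Type} (F G : IForm σ)
    (h : IForm.Deriv ∅ (IForm.biimp F G)) (H : Set (IForm σ)) :
    ∀ I : Set σ, IForm.StableModel I (H ∪ {F}) ↔ IForm.StableModel I (H ∪ {G}) := by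
  intro I
  have key : ∀ J : Set σ, IForm.sat J (IForm.reduct I F) ↔ IForm.sat J (IForm.reduct I G) := by
    intro J
    have hs := IForm.sound h I J (by intro K hK; simp at hK)
    unfold IForm.biimp IForm.and2 at hs
    have h1 := hs true
    have h2 := hs false
    simp only [cond] at h1 h2
    unfold IForm.reduct at h1 h2
    split_ifs at h1 with hp1
    · split_ifs at h2 with hp2
      · exact ⟨h1, h2⟩
      · exact absurd h2 (IForm.not_sat_bot J)
    · exact absurd h1 (IForm.not_sat_bot J)
  have hsets : ∀ J : Set σ,
      IForm.satSet J (IForm.reduct I '' (H ∪ {F})) ↔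
      IForm.satSet J (IForm.reduct I '' (H ∪ {G})) := by
    intro J
    simp only [IForm.satSet, Set.forall_mem_image, Set.mem_union, Set.mem_singleton_iff]
    constructor
    · intro hh K hK
      rcases hK with hK | rfl
      · exact hh (Or.inl hK)
      · exact (key J).1 (hh (Or.inr rfl))
    · intro hh K hK
      rcases hK with hK | rfl
      · exact hh (Or.inl hK)
      · exact (key J).2 (hh (Or.inr rfl))
  unfold IForm.StableModel
  constructor
  · rintro ⟨h1, h2⟩
    exact ⟨(hsets I).1 h1, fun J hJ => h2 J ((hsets J).2 hJ)⟩
  · rintro ⟨h1, h2⟩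
    exact ⟨(hsets I).2 h1, fun J hJ => h2 J ((hsets J).1 hJ)⟩
end

section
/- In the extended infinitary system, the implication (F → ⋁_{i∈I} G_i) → ⋁_{i∈I}(F → G_i) is a theorem, for any formula F and any non-empty bounded family (G_i)_{i∈I} of formulas. -/
open Classical

namespace IForm

variable {σ : Type}

/-- The extended system: the basic system plus the axiom schemas
`F ∨ (F → G) ∨ ¬G` (Hosoi), the converse infinitary De Morgan law
`¬⋀ F → ⋁ ¬F`, and the two converse infinitary distributivity laws
(for non-empty families). -/
inductive DerivE : Finset (IForm σ) → IForm σ → Prop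
  | ax (F : IForm σ) : DerivE {F} F
  | conjI (Γ : Finset (IForm σ)) (ι : Type) (f : ι → IForm σ) :
      (∀ i, DerivE Γ (f i)) → DerivE Γ (conj ι f)
  | conjE (Γ : Finset (IForm σ)) (ι : Type) (f : ι → IForm σ) (i : ι) :
      DerivE Γ (conj ι f) → DerivE Γ (f i)
  | disjI (Γ : Finset (IForm σ)) (ι : Type) (f : ι → IForm σ) (i : ι) :
      DerivE Γ (f i) → DerivE Γ (disj ι f)
  | disjE (Γ Δ : Finset (IForm σ)) (ι : Type) (f : ι → IForm σ) (F : IForm σ) :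
      DerivE Γ (disj ι f) → (∀ i, DerivE (insert (f i) Δ) F) → DerivE (Γ ∪ Δ) F
  | implI (Γ : Finset (IForm σ)) (F G : IForm σ) :
      DerivE (insert F Γ) G → DerivE Γ (impl F G)
  | implE (Γ Δ : Finset (IForm σ)) (F G : IForm σ) :
      DerivE Γ F → DerivE Δ (impl F G) → DerivE (Γ ∪ Δ) G
  | weak (Γ Δ : Finset (IForm σ)) (F : IForm σ) :
      DerivE Γ F → DerivE (Γ ∪ Δ) F
  | hosoi (F G : IForm σ) : DerivE ∅ (or3 F (impl F G) (neg G))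
  | demConv (ι : Type) (f : ι → IForm σ) :
      DerivE ∅ (impl (neg (conj ι f)) (disj ι fun i => neg (f i)))
  | distConv1 (ι : Type) [Nonempty ι] (κ : ι → Type) (g : (i : ι) → κ i → IForm σ) :
      DerivE ∅ (impl (conj ι fun i => disj (κ i) (g i))
                     (disj ((i : ι) → κ i) fun c => conj ι fun i => g i (c i)))
  | distConv2 (ι : Type) [Nonempty ι] (κ : ι → Type) (g : (i : ι) → κ i → IForm σ) :
      DerivE ∅ (impl (conj ((i : ι) → κ i) fun c => disj ι fun i => g i (c i))
                     (disj ι fun i => conj (κ i) (g i)))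

/-- The classical extended system: like the extended system, but with the
Hosoi axiom schema replaced by the law of the excluded middle `F ∨ ¬F`. -/
inductive DerivC : Finset (IForm σ) → IForm σ → Prop
  | ax (F : IForm σ) : DerivC {F} F
  | conjI (Γ : Finset (IForm σ)) (ι : Type) (f : ι → IForm σ) :
      (∀ i, DerivC Γ (f i)) → DerivC Γ (conj ι f)
  | conjE (Γ : Finset (IForm σ)) (ι : Type) (f : ι → IForm σ) (i : ι) :
      DerivC Γ (conj ι f) → DerivC Γ (f i)
  | disjI (Γ : Finset (IForm σ)) (ι : Type) (f : ι → IForm σ) (i : ι) :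
      DerivC Γ (f i) → DerivC Γ (disj ι f)
  | disjE (Γ Δ : Finset (IForm σ)) (ι : Type) (f : ι → IForm σ) (F : IForm σ) :
      DerivC Γ (disj ι f) → (∀ i, DerivC (insert (f i) Δ) F) → DerivC (Γ ∪ Δ) F
  | implI (Γ : Finset (IForm σ)) (F G : IForm σ) :
      DerivC (insert F Γ) G → DerivC Γ (impl F G)
  | implE (Γ Δ : Finset (IForm σ)) (F G : IForm σ) :
      DerivC Γ F → DerivC Δ (impl F G) → DerivC (Γ ∪ Δ) G
  | weak (Γ Δ : Finset (IForm σ)) (F : IForm σ) :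
      DerivC Γ F → DerivC (Γ ∪ Δ) F
  | lem (F : IForm σ) : DerivC ∅ (or2 F (neg F))
  | demConv (ι : Type) (f : ι → IForm σ) :
      DerivC ∅ (impl (neg (conj ι f)) (disj ι fun i => neg (f i)))
  | distConv1 (ι : Type) [Nonempty ι] (κ : ι → Type) (g : (i : ι) → κ i → IForm σ) :
      DerivC ∅ (impl (conj ι fun i => disj (κ i) (g i))
                     (disj ((i : ι) → κ i) fun c => conj ι fun i => g i (c i)))
  | distConv2 (ι : Type) [Nonempty ι] (κ : ι → Type) (g : (i : ι) → κ i → IForm σ) :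
      DerivC ∅ (impl (conj ((i : ι) → κ i) fun c => disj ι fun i => g i (c i))
                     (disj ι fun i => conj (κ i) (g i)))

end IForm


namespace IForm

variable {σ : Type}

theorem DerivE.wk {Γ Δ : Finset (IForm σ)} {F : IForm σ}
    (h : DerivE Γ F) (hs : Γ ⊆ Δ) : DerivE Δ F := by
  have := DerivE.weak Γ Δ F h
  rwa [Finset.union_eq_right.mpr hs] at this

theorem DerivE.hyp {Γ : Finset (IForm σ)} {F : IForm σ} (h : F ∈ Γ) : DerivE Γ F :=
  (DerivE.ax F).wk (Finset.singleton_subset_iff.mpr h)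

theorem DerivE.mp {Γ : Finset (IForm σ)} {F G : IForm σ}
    (h1 : DerivE Γ (impl F G)) (h2 : DerivE Γ F) : DerivE Γ G := by
  have := DerivE.implE Γ Γ F G h2 h1
  simpa using this

theorem DerivE.exfalso {Γ : Finset (IForm σ)} {F : IForm σ}
    (h : DerivE Γ (bot (σ := σ))) : DerivE Γ F := by
  have := DerivE.disjE Γ Γ Empty Empty.elim F h (fun i => i.elim)
  simpa using this

theorem DerivE.disjE' {Γ : Finset (IForm σ)} {ι : Type} {f : ι → IForm σ} {F : IForm σ}
    (h : DerivE Γ (disj ι f)) (h2 : ∀ i, DerivE (insert (f i) Γ) F) : DerivE Γ F := by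
  have := DerivE.disjE Γ Γ ι f F h h2
  simpa using this

end IForm

open IForm in
/-- In the extended system, `(F → ⋁_{i∈I} G_i) → ⋁_{i∈I}(F → G_i)`
is a theorem, for any formula `F` and non-empty family `(G_i)_{i∈I}`. -/
theorem extended_imp_disj {σ : Type} (I : Type) [Nonempty I]
    (F : IForm σ) (G : I → IForm σ) :
    DerivE ∅ (impl
      (impl F (disj I G))
      (disj I fun i => impl F (G i))) := by
  apply DerivE.implI
  set Γ : Finset (IForm σ) := insert (impl F (disj I G)) ∅ with hΓ
  set g : I → Fin 3 → IForm σ := fun i k => [F, impl F (G i), neg (G i)].get k with hg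
  have hconj : DerivE Γ (conj I fun i => disj (Fin 3) (g i)) := by
    apply DerivE.conjI
    intro i
    exact (DerivE.hosoi F (G i)).wk (Finset.empty_subset _)
  have hdist := (DerivE.distConv1 I (fun _ => Fin 3) g).wk (Finset.empty_subset Γ)
  have hd : DerivE Γ (disj (I → Fin 3) fun c => conj I fun i => g i (c i)) :=
    hdist.mp hconj
  apply DerivE.disjE' hd
  intro c
  set Δ : Finset (IForm σ) := insert (conj I fun i => g i (c i)) Γ with hΔ
  have hH0 : DerivE Δ (impl F (disj I G)) := DerivE.hyp (by simp [hΔ, hΓ])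
  have hC : DerivE Δ (conj I fun i => g i (c i)) := DerivE.hyp (by simp [hΔ])
  obtain ⟨i0⟩ := ‹Nonempty I›
  by_cases h1 : ∃ i, c i = 1
  · obtain ⟨i, hi⟩ := h1
    have h := DerivE.conjE Δ I _ i hC
    simp only [hi] at h
    exact DerivE.disjI _ I _ i h
  · by_cases h0 : ∃ i, c i = 0
    · obtain ⟨i, hi⟩ := h0
      have hF : DerivE Δ F := by
        have h := DerivE.conjE Δ I _ i hC
        simp only [hi] at h
        exact h
      have hdG : DerivE Δ (disj I G) := hH0.mp hF
      apply DerivE.disjE' hdG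
      intro j
      apply DerivE.disjI _ I _ j
      apply DerivE.implI
      exact DerivE.hyp (by simp)
    · have h2 : ∀ i, c i = 2 := by
        intro i
        have hlt : (c i).val < 3 := (c i).isLt
        have e1 : (c i).val ≠ 1 := fun h => h1 ⟨i, Fin.ext h⟩
        have e0 : (c i).val ≠ 0 := fun h => h0 ⟨i, Fin.ext h⟩
        apply Fin.ext
        omega
      have hneg : ∀ i, DerivE Δ (neg (G i)) := by
        intro i
        have h := DerivE.conjE Δ I _ i hC
        simp only [h2 i] at h
        exact h
      apply DerivE.disjI _ I _ i0
      apply DerivE.implI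
      have hF : DerivE (insert F Δ) F := DerivE.hyp (by simp)
      have hdG : DerivE (insert F Δ) (disj I G) :=
        (hH0.wk (Finset.subset_insert _ _)).mp hF
      apply DerivE.exfalso
      apply DerivE.disjE' hdG
      intro j
      have hGj : DerivE (insert (G j) (insert F Δ)) (G j) := DerivE.hyp (by simp)
      have hn : DerivE (insert (G j) (insert F Δ)) (neg (G j)) :=
        (hneg j).wk (fun x hx => by simp [Finset.mem_insert.mpr (Or.inr (Finset.mem_insert.mpr (Or.inr hx)))])
      exact hn.mp hGj
end
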